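/- arXiv:2303.15459 — 3 statements merged into one kernel-verified Lean document; each statement's English description precedes it below -/
import Mathlib

section
/- Let real numbers p11, p22, p12, λ, d11, d22, ds, f satisfy the Lagrange multiplier system, and set δ_s = d11·d22 − ds². Then λ satisfies the quartic equation f²·(λ²−1)² + δ_s·(λ+1)² − (d11+d22)²·λ = 0. -/
/-- The Lagrange multiplier `λ` satisfies the quartic
`f²·(λ²−1)² + δ_s·(λ+1)² − (d11+d22)²·λ = 0`, where `δ_s = d11·d22 − ds²`. -/
theorem lambda_quartic (p11 p22 p12 lam d11 d22 ds f : ℝ)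
    (h1 : p11 + lam * p22 = d11)
    (h2 : lam * p11 + p22 = d22)
    (h3 : (1 - lam) * p12 = ds)
    (h4 : p11 * p22 - p12 ^ 2 = -f ^ 2) :
    f ^ 2 * (lam ^ 2 - 1) ^ 2 + (d11 * d22 - ds ^ 2) * (lam + 1) ^ 2
      - (d11 + d22) ^ 2 * lam = 0 := by
  linear_combination (lam^2-1)^2 * h4 - (lam+1)^2 * d22 * h1
    - (lam+1)^2 * (p11 + lam*p22) * h2 + (lam+1)^2 * (ds + (1-lam)*p12) * h3
    + lam * (d11 + d22 + (p11+lam*p22) + (lam*p11+p22)) * (h1 + h2)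
end

section
/- Let d, ds, f be real numbers with f > 0 and (d, ds) ≠ (0, 0), and set R = √(d² + ds²). Let ε = 1 or ε = −1, and define λ = 1 + ε·R/f, p11 = −ε·d·f/R, p22 = −p11, p12 = −ε·ds·f/R. Then p11, p22, p12, λ satisfy the Lagrange multiplier system with data d11 = d, d22 = −d, ds, f; in particular p11·p22 − p12² = −f². (These are the two additional real solutions in Case 2 with λ ≠ ±1.) -/
/-- Case 2, `λ ≠ ±1` solutions: with `d11 = d`, `d22 = −d`, `f > 0`,
`(d, ds) ≠ (0, 0)` and `R = √(d² + ds²)`, setting `λ = 1 ± R/f`,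
`p11 = ∓ d·f/R`, `p22 = −p11`, `p12 = ∓ ds·f/R` solves the Lagrange multiplier
system; in particular `p11·p22 − p12² = −f²`. -/
theorem case2_extra_solutions (d ds f eps R : ℝ)
    (hf : 0 < f) (hd : (d, ds) ≠ ((0 : ℝ), (0 : ℝ)))
    (hR : R = Real.sqrt (d ^ 2 + ds ^ 2)) (heps : eps = 1 ∨ eps = -1)
    (p11 p22 p12 lam : ℝ)
    (hlam : lam = 1 + eps * R / f)
    (hp11 : p11 = -(eps * d * f / R))
    (hp22 : p22 = -p11)
    (hp12 : p12 = -(eps * ds * f / R)) :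
    p11 + lam * p22 = d ∧
    lam * p11 + p22 = -d ∧
    (1 - lam) * p12 = ds ∧
    p11 * p22 - p12 ^ 2 = -f ^ 2 := by
  have hpos : 0 < d ^ 2 + ds ^ 2 := by
    rcases eq_or_ne d 0 with h0 | h0
    · have hds : ds ≠ 0 := fun h => hd (by simp [h0, h])
      positivity
    · positivity
  have hR0 : 0 < R := hR ▸ Real.sqrt_pos.mpr hpos
  have hRsq : R ^ 2 = d ^ 2 + ds ^ 2 := by
    rw [hR, Real.sq_sqrt hpos.le]
  subst hlam hp11 hp22 hp12
  rcases heps with h | h <;> subst h <;>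
    refine ⟨by field_simp; ring, by field_simp; ring, by field_simp; ring,
      by field_simp; linear_combination hRsq⟩
end

section
/- Define u : ℝ² → ℝ by u(x₁,x₂) = x₁²/2 − x₁⁴·x₂/4 − x₂²/2 + x₁²·x₂³/2 − x₂⁵/20, and define f² : ℝ² → ℝ by f²(x₁,x₂) = x₁⁶ + 3·x₁⁴·x₂² + 3·x₁²·x₂·(x₂³ − 2) + (1 + x₂³)². Then u satisfies det(D²u)(x₁,x₂) + f²(x₁,x₂) = 0 at every point (x₁,x₂) ∈ ℝ², where det(D²u) = u_{x₁x₁}·u_{x₂x₂} − (u_{x₁x₂})². -/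
/-- Second partial derivative in the first variable. -/
noncomputable def uxx (u : ℝ → ℝ → ℝ) (x y : ℝ) : ℝ :=
  deriv (fun x' => deriv (fun x'' => u x'' y) x') x

/-- Second partial derivative in the second variable. -/
noncomputable def uyy (u : ℝ → ℝ → ℝ) (x y : ℝ) : ℝ :=
  deriv (fun y' => deriv (fun y'' => u x y'') y') y

/-- Mixed second partial derivative. -/
noncomputable def uxy (u : ℝ → ℝ → ℝ) (x y : ℝ) : ℝ :=
  deriv (fun x' => deriv (fun y' => u x' y') y) x

/-- Determinant of the Hessian matrix: `u_{x₁x₁}·u_{x₂x₂} − (u_{x₁x₂})²`. -/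
noncomputable def hessDet (u : ℝ → ℝ → ℝ) (x y : ℝ) : ℝ :=
  uxx u x y * uyy u x y - (uxy u x y) ^ 2


private lemma hdx (y x : ℝ) :
    HasDerivAt (fun x : ℝ => x ^ 2 / 2 - x ^ 4 * y / 4 - y ^ 2 / 2
        + x ^ 2 * y ^ 3 / 2 - y ^ 5 / 20) (x - x ^ 3 * y + x * y ^ 3) x := by
  have h : HasDerivAt (fun x : ℝ => x ^ 2 / 2 - x ^ 4 * y / 4 - y ^ 2 / 2
      + x ^ 2 * y ^ 3 / 2 - y ^ 5 / 20)
      ((2 * x ^ 1) / 2 - (4 * x ^ 3) * y / 4 - 0 + (2 * x ^ 1) * y ^ 3 / 2 - 0) x :=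
    (((((hasDerivAt_pow 2 x).div_const 2).sub
        (((hasDerivAt_pow 4 x).mul_const y).div_const 4)).sub (hasDerivAt_const x _)).add
        (((hasDerivAt_pow 2 x).mul_const (y ^ 3)).div_const 2)).sub (hasDerivAt_const x _)
  convert h using 1; ring

private lemma dx (y : ℝ) :
    deriv (fun x : ℝ => x ^ 2 / 2 - x ^ 4 * y / 4 - y ^ 2 / 2
        + x ^ 2 * y ^ 3 / 2 - y ^ 5 / 20) = fun x => x - x ^ 3 * y + x * y ^ 3 := by
  funext x; exact (hdx y x).deriv

private lemma hdy (x y : ℝ) :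
    HasDerivAt (fun y : ℝ => x ^ 2 / 2 - x ^ 4 * y / 4 - y ^ 2 / 2
        + x ^ 2 * y ^ 3 / 2 - y ^ 5 / 20)
      (-(x ^ 4) / 4 - y + 3 * x ^ 2 * y ^ 2 / 2 - y ^ 4 / 4) y := by
  have h : HasDerivAt (fun y : ℝ => x ^ 2 / 2 - x ^ 4 * y / 4 - y ^ 2 / 2
      + x ^ 2 * y ^ 3 / 2 - y ^ 5 / 20)
      (0 - (x ^ 4 * 1) / 4 - (2 * y ^ 1) / 2 + (x ^ 2 * (3 * y ^ 2)) / 2 - (5 * y ^ 4) / 20) y :=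
    ((((hasDerivAt_const y _).sub
        (((hasDerivAt_id y).const_mul (x ^ 4)).div_const 4)).sub
        ((hasDerivAt_pow 2 y).div_const 2)).add
        (((hasDerivAt_pow 3 y).const_mul (x ^ 2)).div_const 2)).sub
        ((hasDerivAt_pow 5 y).div_const 20)
  convert h using 1; ring

private lemma dy (x : ℝ) :
    deriv (fun y : ℝ => x ^ 2 / 2 - x ^ 4 * y / 4 - y ^ 2 / 2
        + x ^ 2 * y ^ 3 / 2 - y ^ 5 / 20)
      = fun y => -(x ^ 4) / 4 - y + 3 * x ^ 2 * y ^ 2 / 2 - y ^ 4 / 4 := by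
  funext y; exact (hdy x y).deriv


/-- The inward-fold exact solution
`u(x₁,x₂) = x₁²/2 − x₁⁴x₂/4 − x₂²/2 + x₁²x₂³/2 − x₂⁵/20` satisfies
`det(D²u) + f² = 0` with
`f²(x₁,x₂) = x₁⁶ + 3x₁⁴x₂² + 3x₁²x₂(x₂³ − 2) + (1 + x₂³)²` everywhere. -/
theorem inward_fold_exact_solution :
    ∀ x₁ x₂ : ℝ,
      hessDet (fun x₁ x₂ => x₁ ^ 2 / 2 - x₁ ^ 4 * x₂ / 4 - x₂ ^ 2 / 2
          + x₁ ^ 2 * x₂ ^ 3 / 2 - x₂ ^ 5 / 20) x₁ x₂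
        + (x₁ ^ 6 + 3 * x₁ ^ 4 * x₂ ^ 2 + 3 * x₁ ^ 2 * x₂ * (x₂ ^ 3 - 2)
          + (1 + x₂ ^ 3) ^ 2) = 0 := by
  intro x y
  have huxx : uxx (fun x₁ x₂ => x₁ ^ 2 / 2 - x₁ ^ 4 * x₂ / 4 - x₂ ^ 2 / 2
      + x₁ ^ 2 * x₂ ^ 3 / 2 - x₂ ^ 5 / 20) x y = 1 - 3 * x ^ 2 * y + y ^ 3 := by
    rw [uxx, dx y]
    have h : HasDerivAt (fun x : ℝ => x - x ^ 3 * y + x * y ^ 3)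
        (1 - (3 * x ^ 2) * y + 1 * y ^ 3) x :=
      ((hasDerivAt_id x).sub ((hasDerivAt_pow 3 x).mul_const y)).add
        ((hasDerivAt_id x).mul_const (y ^ 3))
    rw [h.deriv]; ring
  have huyy : uyy (fun x₁ x₂ => x₁ ^ 2 / 2 - x₁ ^ 4 * x₂ / 4 - x₂ ^ 2 / 2
      + x₁ ^ 2 * x₂ ^ 3 / 2 - x₂ ^ 5 / 20) x y = -1 + 3 * x ^ 2 * y - y ^ 3 := by
    rw [uyy, dy x]
    have h : HasDerivAt (fun y : ℝ => -(x ^ 4) / 4 - y + 3 * x ^ 2 * y ^ 2 / 2 - y ^ 4 / 4)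
        (0 - 1 + (3 * x ^ 2 * (2 * y ^ 1)) / 2 - (4 * y ^ 3) / 4) y :=
      (((hasDerivAt_const y _).sub (hasDerivAt_id y)).add
        (((hasDerivAt_pow 2 y).const_mul (3 * x ^ 2)).div_const 2)).sub
        ((hasDerivAt_pow 4 y).div_const 4)
    rw [h.deriv]; ring
  have huxy : uxy (fun x₁ x₂ => x₁ ^ 2 / 2 - x₁ ^ 4 * x₂ / 4 - x₂ ^ 2 / 2
      + x₁ ^ 2 * x₂ ^ 3 / 2 - x₂ ^ 5 / 20) x y = -(x ^ 3) + 3 * x * y ^ 2 := by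
    rw [uxy]
    have e : (fun x' : ℝ => deriv (fun y' : ℝ => x' ^ 2 / 2 - x' ^ 4 * y' / 4 - y' ^ 2 / 2
        + x' ^ 2 * y' ^ 3 / 2 - y' ^ 5 / 20) y)
        = fun x' => -(x' ^ 4) / 4 - y + 3 * x' ^ 2 * y ^ 2 / 2 - y ^ 4 / 4 := by
      funext x'; exact (hdy x' y).deriv
    rw [e]
    have h : HasDerivAt (fun x' : ℝ => -(x' ^ 4) / 4 - y + 3 * x' ^ 2 * y ^ 2 / 2 - y ^ 4 / 4)
        (-(4 * x ^ 3) / 4 - 0 + (2 * x ^ 1) * (3 * y ^ 2 / 2) - 0) x := by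
      have : HasDerivAt (fun x' : ℝ => -(x' ^ 4) / 4 - y + (x' ^ 2) * (3 * y ^ 2 / 2) - y ^ 4 / 4)
          (-(4 * x ^ 3) / 4 - 0 + (2 * x ^ 1) * (3 * y ^ 2 / 2) - 0) x :=
        ((((hasDerivAt_pow 4 x).neg.div_const 4).sub (hasDerivAt_const x _)).add
          ((hasDerivAt_pow 2 x).mul_const _)).sub (hasDerivAt_const x _)
      convert this using 2 with x'; ring
    rw [h.deriv]; ring
  rw [hessDet, huxx, huyy, huxy]; ring
end
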